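/- Only zero modes contribute to the topological charge (finite-dimensional index identity): let V be a finite-dimensional complex inner product space, D a skew-adjoint operator on V (D* = −D), Γ a self-adjoint unitary operator on V (Γ* = Γ, Γ² = id) with ΓD = −DΓ, and m a nonzero real number. Then D + m·id is invertible and m · Tr(Γ ∘ (D + m·id)⁻¹) = Tr(Γ ∘ P), where P is the orthogonal projection of V onto ker D; in particular the left-hand side is independent of m. -/

import Mathlib

open LinearMap

/-- Finite-dimensional index identity: only zero modes contribute. -/
theorem index_identity {V : Type*} [NormedAddCommGroup V]
    [InnerProductSpace ℂ V] [FiniteDimensional ℂ V]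
    (D Γ : Module.End ℂ V)
    (hD : LinearMap.adjoint D = -D)
    (hΓa : LinearMap.adjoint Γ = Γ) (hΓu : Γ * Γ = 1)
    (hanti : Γ * D = -(D * Γ))
    (m : ℝ) (hm : m ≠ 0) :
    IsUnit (D + (m : ℂ) • (1 : Module.End ℂ V)) ∧
      (m : ℂ) * LinearMap.trace ℂ V (Γ * Ring.inverse (D + (m : ℂ) • 1)) =
        LinearMap.trace ℂ V
          (Γ * ((LinearMap.ker D).subtype ∘ₗ
            (Submodule.orthogonalProjectionOnto (LinearMap.ker D)).toLinearMap)) := by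
  set A : Module.End ℂ V := D + (m : ℂ) • 1 with hA_def
  set K : Submodule ℂ V := LinearMap.ker D with hK_def
  set P : Module.End ℂ V := K.subtype ∘ₗ (Submodule.orthogonalProjectionOnto K).toLinearMap with hP_def
  -- skew-adjointness: ⟪D x, x⟫ purely imaginary
  have hskew : ∀ x : V, (inner ℂ (D x) x : ℂ).re = 0 := by
    intro x
    have h1 : (inner ℂ (D x) x : ℂ) = - inner ℂ x (D x) := by
      have := (LinearMap.adjoint_inner_right D x x).symm
      rw [hD] at this
      simpa using this
    have h2 : (inner ℂ x (D x) : ℂ).re = (inner ℂ (D x) x : ℂ).re := by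
      rw [← inner_conj_symm x (D x), Complex.conj_re]
    have h3 := congrArg Complex.re h1
    rw [Complex.neg_re, h2] at h3
    linarith
  -- A is a unit
  have hAinj : Function.Injective A := by
    rw [← LinearMap.ker_eq_bot, LinearMap.ker_eq_bot']
    intro x hx
    have hx0 : D x + (m : ℂ) • x = 0 := by
      simpa [hA_def] using hx
    have h3 : (inner ℂ (D x + (m : ℂ) • x) x : ℂ) = 0 := by rw [hx0, inner_zero_left]
    rw [inner_add_left, inner_smul_left, Complex.conj_ofReal] at h3
    have h4 := congrArg Complex.re h3
    have h5 : ((m : ℂ) * (inner ℂ x x : ℂ)).re = m * ‖x‖ ^ 2 := by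
      have hinner : (inner ℂ x x : ℂ) = ((‖x‖ ^ 2 : ℝ) : ℂ) := by
        rw [inner_self_eq_norm_sq_to_K]; norm_cast
      rw [hinner, ← Complex.ofReal_mul, Complex.ofReal_re]
    rw [Complex.add_re, hskew x, zero_add, h5, Complex.zero_re] at h4
    have h6 : ‖x‖ ^ 2 = 0 := by
      rcases mul_eq_zero.mp (by nlinarith [h4] : m * ‖x‖ ^ 2 = 0) with h | h
      · exact absurd h hm
      · exact h
    have : ‖x‖ = 0 := by nlinarith [norm_nonneg x]
    exact norm_eq_zero.mp this
  have hAunit : IsUnit A :=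
    (Module.End.isUnit_iff _).mpr
      ⟨hAinj, LinearMap.injective_iff_surjective.mp hAinj⟩
  refine ⟨hAunit, ?_⟩
  set R : Module.End ℂ V := Ring.inverse A with hR_def
  have hAR : A * R = 1 := Ring.mul_inverse_cancel A hAunit
  have hRA : R * A = 1 := Ring.inverse_mul_cancel A hAunit
  have hDA : D * A = A * D := by
    simp [hA_def, mul_add, add_mul, mul_smul_comm, smul_mul_assoc]
  have hDR : D * R = R * D := by
    calc D * R = R * A * (D * R) := by rw [hRA, one_mul]
      _ = R * (A * D) * R := by simp only [mul_assoc]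
      _ = R * (D * A) * R := by rw [hDA]
      _ = R * D * (A * R) := by simp only [mul_assoc]
      _ = R * D := by rw [hAR, mul_one]
  -- key trick: trace of Γ D X vanishes if X commutes with D
  have key : ∀ X : Module.End ℂ V, D * X = X * D →
      LinearMap.trace ℂ V (Γ * (D * X)) = 0 := by
    intro X hX
    have h1 : Γ * (D * X) = -(D * (Γ * X)) := by
      rw [← mul_assoc, hanti, neg_mul, mul_assoc]
    have h2 : LinearMap.trace ℂ V (D * (Γ * X)) =
        LinearMap.trace ℂ V ((Γ * X) * D) := LinearMap.trace_mul_comm ℂ (D) (Γ * X)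
    have h4 : (Γ * X) * D = Γ * (D * X) := by rw [mul_assoc, ← hX]
    have h5 : LinearMap.trace ℂ V (Γ * (D * X)) =
        - LinearMap.trace ℂ V (Γ * (D * X)) := by
      conv_lhs => rw [h1]
      rw [map_neg, h2, h4]
    linear_combination h5 / 2
  -- Step 1: m * Tr(Γ R) = Tr Γ
  have step1 : (m : ℂ) * LinearMap.trace ℂ V (Γ * R) = LinearMap.trace ℂ V Γ := by
    have e1 : (m : ℂ) • (Γ * R) = Γ - Γ * (D * R) := by
      have : (m : ℂ) • (1 : Module.End ℂ V) = A - D := by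
        rw [hA_def]; abel
      calc (m : ℂ) • (Γ * R) = Γ * (((m : ℂ) • (1 : Module.End ℂ V)) * R) := by
            simp [mul_smul_comm, smul_mul_assoc]
        _ = Γ * ((A - D) * R) := by rw [this]
        _ = Γ * (A * R) - Γ * (D * R) := by rw [sub_mul, mul_sub]
        _ = Γ - Γ * (D * R) := by rw [hAR, mul_one]
    calc (m : ℂ) * LinearMap.trace ℂ V (Γ * R)
        = LinearMap.trace ℂ V ((m : ℂ) • (Γ * R)) := by rw [map_smul]; rfl
      _ = LinearMap.trace ℂ V Γ - LinearMap.trace ℂ V (Γ * (D * R)) := by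
          rw [e1, map_sub]
      _ = LinearMap.trace ℂ V Γ := by rw [key R hDR, sub_zero]
  -- Step 2: construct pseudo-inverse E of D
  have hrange : ∀ x : V, D x ∈ Kᗮ := by
    intro x
    intro u hu
    have hu0 : D u = 0 := hu
    have h1 : (inner ℂ u (D x) : ℂ) = inner ℂ (LinearMap.adjoint D u) x :=
      (LinearMap.adjoint_inner_left D x u).symm
    rw [hD] at h1
    simpa [hu0] using h1
  let Dres : Kᗮ →ₗ[ℂ] Kᗮ := D.restrict (fun x _ => hrange x)
  have hinj : Function.Injective Dres := by
    rw [← LinearMap.ker_eq_bot, LinearMap.ker_eq_bot']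
    rintro ⟨x, hx⟩ h0
    have hDx : D x = 0 := by
      have := congrArg Subtype.val h0
      simpa [Dres] using this
    have hxK : x ∈ K := hDx
    have : x = 0 := by
      have := Submodule.inf_orthogonal_eq_bot K
      have hmem : x ∈ K ⊓ Kᗮ := ⟨hxK, hx⟩
      rw [this] at hmem
      simpa using hmem
    simp [this]
  let e : Kᗮ ≃ₗ[ℂ] Kᗮ :=
    LinearEquiv.ofBijective Dres ⟨hinj, LinearMap.injective_iff_surjective.mp hinj⟩
  set E : Module.End ℂ V :=
    Kᗮ.subtype ∘ₗ (e.symm : Kᗮ →ₗ[ℂ] Kᗮ) ∘ₗ (Submodule.orthogonalProjectionOnto Kᗮ).toLinearMap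
    with hE_def
  have hDE : D * E = 1 - P := by
    ext x
    have h1 : D ((e.symm (Submodule.orthogonalProjectionOnto Kᗮ x) : Kᗮ) : V)
        = ((e (e.symm (Submodule.orthogonalProjectionOnto Kᗮ x)) : Kᗮ) : V) := rfl
    have h2 : e (e.symm (Submodule.orthogonalProjectionOnto Kᗮ x)) = Submodule.orthogonalProjectionOnto Kᗮ x :=
      e.apply_symm_apply _
    show D (E x) = x - _
    rw [hE_def]
    simp only [LinearMap.coe_comp, Function.comp_apply, ContinuousLinearMap.coe_coe,
      Submodule.coe_subtype, LinearEquiv.coe_coe]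
    rw [h1, h2, Submodule.orthogonalProjectionOnto_orthogonal]
    rfl
  have hED : E * D = 1 - P := by
    ext x
    have hproj : Submodule.orthogonalProjectionOnto Kᗮ (D x) = ⟨D x, hrange x⟩ :=
      Subtype.ext (Submodule.starProjection_eq_self_iff.mpr (hrange x))
    have hsub : x - (Submodule.orthogonalProjectionOnto K x : V) ∈ Kᗮ :=
      Submodule.sub_starProjection_mem_orthogonal (K := K) x
    have hsymm : e.symm ⟨D x, hrange x⟩
        = ⟨x - (Submodule.orthogonalProjectionOnto K x : V), hsub⟩ := by
      rw [LinearEquiv.symm_apply_eq]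
      apply Subtype.ext
      show D x = D (x - (Submodule.orthogonalProjectionOnto K x : V))
      have hker : D ((Submodule.orthogonalProjectionOnto K x : V)) = 0 :=
        (Submodule.orthogonalProjectionOnto K x).2
      rw [map_sub, hker, sub_zero]
    show E (D x) = x - _
    rw [hE_def]
    simp only [LinearMap.coe_comp, Function.comp_apply, ContinuousLinearMap.coe_coe,
      Submodule.coe_subtype, LinearEquiv.coe_coe]
    rw [hproj, hsymm]
    rfl
  -- Step 3: Tr Γ = Tr (Γ P)
  have step2 : LinearMap.trace ℂ V Γ = LinearMap.trace ℂ V (Γ * P) := by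
    have hcomm : D * E = E * D := by rw [hDE, hED]
    have h0 : LinearMap.trace ℂ V (Γ * (D * E)) = 0 := key E hcomm
    rw [hDE] at h0
    have : Γ * (1 - P) = Γ - Γ * P := by rw [mul_sub, mul_one]
    rw [this, map_sub, sub_eq_zero] at h0
    exact h0
  rw [step1, step2]
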